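/- For every ε > 0 there is a constant C_ε with the following property. For all real numbers H ≥ 1 and D₀ ≥ 1 and every positive integer R, ∑_{h=1}^{⌊H⌋} ( ∑_{s | h} ∑_{d ∈ ℕ, D₀ ≤ d ≤ 2D₀, s | dR} s/(dR) )² ≤ C_ε · H · (H · D₀ · R)^ε, where the middle sum runs over the positive divisors s of h and the inner sum runs over positive integers d in [D₀, 2D₀] such that s divides dR. -/

import Mathlib

open scoped BigOperators Classical

open Finset

private lemma harm_sum (n : ℕ) : ∑ d ∈ Finset.Icc 1 n, (d : ℝ)⁻¹ ≤ 1 + Real.log n := by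
  have h := harmonic_le_one_add_log n
  rw [harmonic_eq_sum_Icc] at h
  push_cast at h
  exact h

private lemma filter_dvd_card (N e : ℕ) :
    ((Finset.Icc 1 N).filter (fun d => e ∣ d)).card = N / e := by
  rw [show Finset.Icc 1 N = Finset.Ioc 0 N from Finset.Icc_add_one_left_eq_Ioc 0 N]
  exact Nat.Ioc_filter_dvd_card_eq_div N e

private lemma filter_dvd_eq_image (N g : ℕ) (hg : 0 < g) :
    (Finset.Icc 1 N).filter (fun d => g ∣ d)
      = (Finset.Icc 1 (N / g)).image (fun k => g * k) := by
  ext x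
  simp only [mem_filter, mem_Icc, mem_image]
  constructor
  · rintro ⟨⟨hx1, hxN⟩, k, rfl⟩
    refine ⟨k, ⟨?_, ?_⟩, rfl⟩
    · rcases Nat.eq_zero_or_pos k with rfl | hk
      · omega
      · exact hk
    · rw [Nat.le_div_iff_mul_le hg, mul_comm]; exact hxN
  · rintro ⟨k, ⟨hk1, hk2⟩, rfl⟩
    rw [Nat.le_div_iff_mul_le hg] at hk2
    exact ⟨⟨Nat.mul_pos hg hk1, by rw [mul_comm]; exact hk2⟩, ⟨k, rfl⟩⟩

private lemma S_bound (N g : ℕ) (hg : 0 < g) (hN : 1 ≤ N) :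
    ∑ s ∈ Finset.Icc 1 N, (if g ∣ s then (s : ℝ)⁻¹ else 0)
      ≤ (g : ℝ)⁻¹ * (1 + Real.log N) := by
  rw [← Finset.sum_filter, filter_dvd_eq_image N g hg,
    Finset.sum_image (fun a _ b _ h => Nat.eq_of_mul_eq_mul_left hg h)]
  have h1 : ∀ k ∈ Finset.Icc 1 (N / g), ((g * k : ℕ) : ℝ)⁻¹ = (g : ℝ)⁻¹ * (k : ℝ)⁻¹ := by
    intro k _; push_cast; rw [mul_inv]
  rw [Finset.sum_congr rfl h1, ← Finset.mul_sum]
  have hlog : Real.log ((N / g : ℕ) : ℝ) ≤ Real.log N := by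
    rcases Nat.eq_zero_or_pos (N / g) with h | h
    · rw [h]; simpa using Real.log_nonneg (by exact_mod_cast hN)
    · exact Real.log_le_log (by exact_mod_cast h) (by exact_mod_cast Nat.div_le_self N g)
  have h2 : ∑ k ∈ Finset.Icc 1 (N / g), (k : ℝ)⁻¹ ≤ 1 + Real.log N :=
    le_trans (harm_sum (N / g)) (by linarith)
  have hginv : (0:ℝ) ≤ (g : ℝ)⁻¹ := by positivity
  exact mul_le_mul_of_nonneg_left h2 hginv

private lemma divisors_eq_filter (h N : ℕ) (h1 : 1 ≤ h) (h2 : h ≤ N) :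
    h.divisors = (Finset.Icc 1 N).filter (· ∣ h) := by
  ext a
  simp only [Nat.mem_divisors, mem_filter, mem_Icc]
  constructor
  · rintro ⟨ha, hh⟩
    exact ⟨⟨Nat.pos_of_dvd_of_pos ha (by omega), (Nat.le_of_dvd (by omega) ha).trans h2⟩, ha⟩
  · rintro ⟨_, ha⟩
    exact ⟨ha, by omega⟩

private lemma tau_sq_sum (N : ℕ) (hN : 1 ≤ N) :
    ∑ h ∈ Finset.Icc 1 N, ((h.divisors.card : ℝ)) ^ 2
      ≤ (N : ℝ) * (1 + Real.log N) ^ 3 := by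
  set I := Finset.Icc 1 N with hI
  have hlogN : (0:ℝ) ≤ Real.log N := Real.log_nonneg (by exact_mod_cast hN)
  -- step 1: replace card² by double indicator sum
  have step1 : ∀ h ∈ I, ((h.divisors.card : ℝ)) ^ 2
      = ∑ s ∈ I, ∑ t ∈ I, (if s ∣ h then (1:ℝ) else 0) * (if t ∣ h then (1:ℝ) else 0) := by
    intro h hh
    rw [hI, mem_Icc] at hh
    have hcard : ((h.divisors.card : ℝ)) = ∑ s ∈ I, (if s ∣ h then (1:ℝ) else 0) := by
      rw [Finset.sum_boole, divisors_eq_filter h N hh.1 hh.2]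
    rw [sq, hcard, Finset.sum_mul_sum]
  rw [Finset.sum_congr rfl step1, Finset.sum_comm]
  have swap2 : (∑ s ∈ I, ∑ h ∈ I, ∑ t ∈ I,
        ((if s ∣ h then (1:ℝ) else 0) * if t ∣ h then (1:ℝ) else 0))
      = ∑ s ∈ I, ∑ t ∈ I, ∑ h ∈ I,
        ((if s ∣ h then (1:ℝ) else 0) * if t ∣ h then (1:ℝ) else 0) :=
    Finset.sum_congr rfl fun s _ => Finset.sum_comm
  rw [swap2]
  -- step 2: count h's
  have step2 : ∀ s ∈ I, ∀ t ∈ I,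
      ∑ h ∈ I, (if s ∣ h then (1:ℝ) else 0) * (if t ∣ h then (1:ℝ) else 0)
        ≤ (N : ℝ) * (Nat.gcd s t) / ((s : ℝ) * t) := by
    intro s hs t ht
    rw [hI, mem_Icc] at hs ht
    have hspos : 0 < s := hs.1
    have htpos : 0 < t := ht.1
    have hgcd : 0 < Nat.gcd s t := Nat.gcd_pos_of_pos_left t hspos
    have hlcm : 0 < Nat.lcm s t := Nat.lcm_pos hspos htpos
    have key : (Nat.gcd s t : ℝ) * (Nat.lcm s t : ℝ) = (s : ℝ) * t := by
      exact_mod_cast congrArg (Nat.cast (R := ℝ)) (Nat.gcd_mul_lcm s t)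
    have heq : ∀ h ∈ I, (if s ∣ h then (1:ℝ) else 0) * (if t ∣ h then (1:ℝ) else 0)
        = if Nat.lcm s t ∣ h then (1:ℝ) else 0 := by
      intro h _
      by_cases h1 : s ∣ h <;> by_cases h2 : t ∣ h <;>
        simp [h1, h2, Nat.lcm_dvd_iff]
    calc ∑ h ∈ I, (if s ∣ h then (1:ℝ) else 0) * (if t ∣ h then (1:ℝ) else 0)
        = ((I.filter (fun h => Nat.lcm s t ∣ h)).card : ℝ) := by
          rw [Finset.sum_congr rfl heq, Finset.sum_boole]
      _ = ((N / Nat.lcm s t : ℕ) : ℝ) := by rw [hI, filter_dvd_card]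
      _ ≤ (N : ℝ) / (Nat.lcm s t : ℝ) := Nat.cast_div_le
      _ = (N : ℝ) * (Nat.gcd s t) / ((s : ℝ) * t) := by
          have h1 : (Nat.lcm s t : ℝ) ≠ 0 := by positivity
          have h2 : (s : ℝ) ≠ 0 := by positivity
          have h3 : (t : ℝ) ≠ 0 := by positivity
          field_simp
          linear_combination (-1 : ℝ) * key
  refine le_trans (Finset.sum_le_sum fun s hs => Finset.sum_le_sum fun t ht => step2 s hs t ht) ?_
  -- step 3: gcd ≤ sum over common divisors
  have step3 : ∀ s ∈ I, ∀ t ∈ I, (N : ℝ) * (Nat.gcd s t) / ((s : ℝ) * t)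
      ≤ ∑ g ∈ I, ((N : ℝ) * g) * (if g ∣ s then (s : ℝ)⁻¹ else 0) * (if g ∣ t then (t : ℝ)⁻¹ else 0) := by
    intro s hs t ht
    rw [hI, mem_Icc] at hs ht
    have hspos : 0 < s := hs.1
    have htpos : 0 < t := ht.1
    have hgcd : 0 < Nat.gcd s t := Nat.gcd_pos_of_pos_left t hspos
    have hgmem : Nat.gcd s t ∈ I := by
      rw [hI, mem_Icc]
      exact ⟨hgcd, (Nat.le_of_dvd hspos (Nat.gcd_dvd_left s t)).trans hs.2⟩
    have hterm : ∀ g ∈ I, (0:ℝ) ≤ ((N : ℝ) * g) * (if g ∣ s then (s : ℝ)⁻¹ else 0)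
        * (if g ∣ t then (t : ℝ)⁻¹ else 0) := by
      intro g _
      split_ifs <;> positivity
    have hval : ((N : ℝ) * (Nat.gcd s t)) * (if Nat.gcd s t ∣ s then (s : ℝ)⁻¹ else 0)
        * (if Nat.gcd s t ∣ t then (t : ℝ)⁻¹ else 0) = (N : ℝ) * (Nat.gcd s t) / ((s : ℝ) * t) := by
      rw [if_pos (Nat.gcd_dvd_left s t), if_pos (Nat.gcd_dvd_right s t)]
      have h2 : (s : ℝ) ≠ 0 := by positivity
      have h3 : (t : ℝ) ≠ 0 := by positivity
      field_simp
    rw [← hval]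
    exact Finset.single_le_sum hterm hgmem
  refine le_trans (Finset.sum_le_sum fun s hs => Finset.sum_le_sum fun t ht => step3 s hs t ht) ?_
  -- reorder sums to put g outermost
  have swap3 : (∑ s ∈ I, ∑ t ∈ I, ∑ g ∈ I,
        ((N : ℝ) * g) * (if g ∣ s then (s : ℝ)⁻¹ else 0) * (if g ∣ t then (t : ℝ)⁻¹ else 0))
      = ∑ s ∈ I, ∑ g ∈ I, ∑ t ∈ I,
        ((N : ℝ) * g) * (if g ∣ s then (s : ℝ)⁻¹ else 0) * (if g ∣ t then (t : ℝ)⁻¹ else 0) :=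
    Finset.sum_congr rfl fun s _ => Finset.sum_comm
  rw [swap3, Finset.sum_comm]
  -- per-g factorization and bound
  have factg : ∀ g ∈ I,
      ∑ s ∈ I, ∑ t ∈ I, ((N : ℝ) * g) * (if g ∣ s then (s : ℝ)⁻¹ else 0) * (if g ∣ t then (t : ℝ)⁻¹ else 0)
        = ((N : ℝ) * g) * ((∑ s ∈ I, (if g ∣ s then (s : ℝ)⁻¹ else 0))
            * (∑ t ∈ I, (if g ∣ t then (t : ℝ)⁻¹ else 0))) := by
    intro g _
    rw [Finset.sum_mul_sum, Finset.mul_sum]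
    refine Finset.sum_congr rfl fun s _ => ?_
    rw [Finset.mul_sum]
    exact Finset.sum_congr rfl fun t _ => by ring
  rw [Finset.sum_congr rfl factg]
  have perg : ∀ g ∈ I, ((N : ℝ) * g) * ((∑ s ∈ I, (if g ∣ s then (s : ℝ)⁻¹ else 0))
        * (∑ t ∈ I, (if g ∣ t then (t : ℝ)⁻¹ else 0)))
      ≤ (N : ℝ) * (1 + Real.log N) ^ 2 * (g : ℝ)⁻¹ := by
    intro g hg
    rw [hI, mem_Icc] at hg
    have hgpos : 0 < g := hg.1
    have hgne : (g : ℝ) ≠ 0 := by positivity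
    set S := ∑ s ∈ I, (if g ∣ s then (s : ℝ)⁻¹ else 0) with hSdef
    have hS0 : 0 ≤ S := Finset.sum_nonneg fun s _ => by split_ifs <;> positivity
    have hSb : S ≤ (g : ℝ)⁻¹ * (1 + Real.log N) := S_bound N g hgpos hN
    have hSS : S * S ≤ ((g : ℝ)⁻¹ * (1 + Real.log N)) * ((g : ℝ)⁻¹ * (1 + Real.log N)) :=
      mul_le_mul hSb hSb hS0 (by positivity)
    calc ((N : ℝ) * g) * (S * S)
        ≤ ((N : ℝ) * g) * (((g : ℝ)⁻¹ * (1 + Real.log N)) * ((g : ℝ)⁻¹ * (1 + Real.log N))) :=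
          mul_le_mul_of_nonneg_left hSS (by positivity)
      _ = (N : ℝ) * (1 + Real.log N) ^ 2 * (g : ℝ)⁻¹ := by
          field_simp
  refine le_trans (Finset.sum_le_sum perg) ?_
  rw [← Finset.mul_sum]
  calc (N : ℝ) * (1 + Real.log N) ^ 2 * ∑ g ∈ I, (g : ℝ)⁻¹
      ≤ (N : ℝ) * (1 + Real.log N) ^ 2 * (1 + Real.log N) :=
        mul_le_mul_of_nonneg_left (harm_sum N) (by positivity)
    _ = (N : ℝ) * (1 + Real.log N) ^ 3 := by ring

private lemma inner_bound (D₀ : ℝ) (R s : ℕ) (hD : 1 ≤ D₀) (hR : 0 < R) (hs : 0 < s) :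
    ∑ d ∈ (Finset.Icc 1 ⌊2 * D₀⌋₊).filter (fun d : ℕ => D₀ ≤ (d : ℝ) ∧ (s ∣ (d * R : ℕ))),
      (s : ℝ) / ((d : ℝ) * (R : ℝ)) ≤ 2 := by
  set M := ⌊2 * D₀⌋₊ with hM
  set g := Nat.gcd s R with hgdef
  have hg : 0 < g := Nat.gcd_pos_of_pos_left R hs
  set e := s / g with hedef
  have hge : g * e = s := Nat.mul_div_cancel' (Nat.gcd_dvd_left s R)
  have he : 0 < e := Nat.pos_of_ne_zero fun h => by
    rw [h, mul_zero] at hge; omega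
  have hD0 : (0:ℝ) < D₀ := by linarith
  have hRpos : (0:ℝ) < (R : ℝ) := by exact_mod_cast hR
  have hsub : (Finset.Icc 1 M).filter (fun d : ℕ => D₀ ≤ (d : ℝ) ∧ (s ∣ (d * R : ℕ)))
      ⊆ (Finset.Icc 1 M).filter (fun d => e ∣ d) := by
    intro d hd
    rw [mem_filter] at hd ⊢
    refine ⟨hd.1, ?_⟩
    obtain ⟨-, -, hdvd⟩ := hd
    have cop : Nat.Coprime e (R / g) := Nat.coprime_div_gcd_div_gcd hg
    have h1 : g * e ∣ g * (d * (R / g)) := by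
      rw [hge, show g * (d * (R / g)) = d * (g * (R / g)) by ring,
        Nat.mul_div_cancel' (Nat.gcd_dvd_right s R)]
      exact hdvd
    have h2 : e ∣ d * (R / g) := (mul_dvd_mul_iff_left hg.ne' ).mp h1
    exact cop.dvd_of_dvd_mul_right h2
  have hbound : ∀ d ∈ (Finset.Icc 1 M).filter (fun d : ℕ => D₀ ≤ (d : ℝ) ∧ (s ∣ (d * R : ℕ))),
      (s : ℝ) / ((d : ℝ) * (R : ℝ)) ≤ (s : ℝ) / (D₀ * (R : ℝ)) := by
    intro d hd
    rw [mem_filter] at hd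
    have hdD : D₀ ≤ (d : ℝ) := hd.2.1
    have : D₀ * (R : ℝ) ≤ (d : ℝ) * (R : ℝ) := by nlinarith
    gcongr
  calc ∑ d ∈ (Finset.Icc 1 M).filter (fun d : ℕ => D₀ ≤ (d : ℝ) ∧ (s ∣ (d * R : ℕ))),
        (s : ℝ) / ((d : ℝ) * (R : ℝ))
      ≤ ∑ d ∈ (Finset.Icc 1 M).filter (fun d : ℕ => D₀ ≤ (d : ℝ) ∧ (s ∣ (d * R : ℕ))),
        (s : ℝ) / (D₀ * (R : ℝ)) := Finset.sum_le_sum hbound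
    _ = (((Finset.Icc 1 M).filter (fun d : ℕ => D₀ ≤ (d : ℝ) ∧ (s ∣ (d * R : ℕ)))).card : ℝ)
        * ((s : ℝ) / (D₀ * (R : ℝ))) := by rw [Finset.sum_const, nsmul_eq_mul]
    _ ≤ (((Finset.Icc 1 M).filter (fun d => e ∣ d)).card : ℝ) * ((s : ℝ) / (D₀ * (R : ℝ))) := by
        have := Finset.card_le_card hsub
        have h0 : (0:ℝ) ≤ (s : ℝ) / (D₀ * (R : ℝ)) := by positivity
        exact mul_le_mul_of_nonneg_right (by exact_mod_cast this) h0
    _ = ((M / e : ℕ) : ℝ) * ((s : ℝ) / (D₀ * (R : ℝ))) := by rw [filter_dvd_card]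
    _ ≤ ((M : ℝ) / (e : ℝ)) * ((s : ℝ) / (D₀ * (R : ℝ))) :=
        mul_le_mul_of_nonneg_right Nat.cast_div_le (by positivity)
    _ ≤ ((2 * D₀) / (e : ℝ)) * ((s : ℝ) / (D₀ * (R : ℝ))) := by
        have hMle : (M : ℝ) ≤ 2 * D₀ := Nat.floor_le (by positivity)
        have hepos : (0:ℝ) < (e : ℝ) := by exact_mod_cast he
        have h9 : (M : ℝ) / (e : ℝ) ≤ (2 * D₀) / (e : ℝ) := by gcongr
        exact mul_le_mul_of_nonneg_right h9 (by positivity)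
    _ = 2 * (g : ℝ) / (R : ℝ) := by
        have hse : (s : ℝ) = (g : ℝ) * (e : ℝ) := by exact_mod_cast hge.symm
        have h1 : (e : ℝ) ≠ 0 := by positivity
        field_simp [hse]
        ring
        rw [hse]; ring
    _ ≤ 2 := by
        have hgR : g ≤ R := Nat.le_of_dvd hR (Nat.gcd_dvd_right s R)
        rw [div_le_iff₀ hRpos]
        have : (g : ℝ) ≤ (R : ℝ) := by exact_mod_cast hgR
        linarith

/-- `∑_{h≤H} (∑_{s|h} ∑_{d∈[D₀,2D₀], s|dR} s/(dR))² ≪_ε H(HD₀R)^ε`. -/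
theorem divisor_sum_square_bound :
    ∀ ε : ℝ, 0 < ε → ∃ Cε : ℝ,
      ∀ (H D₀ : ℝ) (R : ℕ), 1 ≤ H → 1 ≤ D₀ → 0 < R →
        ∑ h ∈ Finset.Icc 1 ⌊H⌋₊,
          (∑ s ∈ h.divisors,
            ∑ d ∈ (Finset.Icc 1 ⌊2 * D₀⌋₊).filter (fun d : ℕ => D₀ ≤ (d : ℝ) ∧ (s ∣ (d * R : ℕ))),
              (s : ℝ) / ((d : ℝ) * (R : ℝ))) ^ 2
          ≤ Cε * H * (H * D₀ * (R : ℝ)) ^ ε := by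
  intro ε hε
  refine ⟨4 * (1 + 3 / ε) ^ 3, ?_⟩
  intro H D₀ R hH hD hR
  set N := ⌊H⌋₊ with hN
  have hN1 : 1 ≤ N := Nat.le_floor (by exact_mod_cast hH)
  have hHpos : (0:ℝ) < H := by linarith
  have hNH : (N : ℝ) ≤ H := Nat.floor_le (by linarith)
  have hlogH : (0:ℝ) ≤ Real.log H := Real.log_nonneg hH
  -- pointwise bound
  have hpt : ∀ h ∈ Finset.Icc 1 N,
      (∑ s ∈ h.divisors,
        ∑ d ∈ (Finset.Icc 1 ⌊2 * D₀⌋₊).filter (fun d : ℕ => D₀ ≤ (d : ℝ) ∧ (s ∣ (d * R : ℕ))),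
          (s : ℝ) / ((d : ℝ) * (R : ℝ))) ^ 2
      ≤ 4 * ((h.divisors.card : ℝ)) ^ 2 := by
    intro h hh
    rw [mem_Icc] at hh
    set B := ∑ s ∈ h.divisors,
        ∑ d ∈ (Finset.Icc 1 ⌊2 * D₀⌋₊).filter (fun d : ℕ => D₀ ≤ (d : ℝ) ∧ (s ∣ (d * R : ℕ))),
          (s : ℝ) / ((d : ℝ) * (R : ℝ)) with hB
    have hB0 : 0 ≤ B := Finset.sum_nonneg fun s _ => Finset.sum_nonneg fun d _ => by positivity
    have hBle : B ≤ 2 * (h.divisors.card : ℝ) := by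
      calc B ≤ ∑ s ∈ h.divisors, (2:ℝ) := by
            refine Finset.sum_le_sum fun s hsm => ?_
            have hs : 0 < s := Nat.pos_of_mem_divisors hsm
            exact inner_bound D₀ R s hD hR hs
        _ = 2 * (h.divisors.card : ℝ) := by rw [Finset.sum_const, nsmul_eq_mul]; ring
    calc B ^ 2 ≤ (2 * (h.divisors.card : ℝ)) ^ 2 := by
          exact pow_le_pow_left₀ hB0 hBle 2
      _ = 4 * ((h.divisors.card : ℝ)) ^ 2 := by ring
  calc ∑ h ∈ Finset.Icc 1 N,
        (∑ s ∈ h.divisors,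
          ∑ d ∈ (Finset.Icc 1 ⌊2 * D₀⌋₊).filter (fun d : ℕ => D₀ ≤ (d : ℝ) ∧ (s ∣ (d * R : ℕ))),
            (s : ℝ) / ((d : ℝ) * (R : ℝ))) ^ 2
      ≤ ∑ h ∈ Finset.Icc 1 N, 4 * ((h.divisors.card : ℝ)) ^ 2 := Finset.sum_le_sum hpt
    _ = 4 * ∑ h ∈ Finset.Icc 1 N, ((h.divisors.card : ℝ)) ^ 2 := by rw [Finset.mul_sum]
    _ ≤ 4 * ((N : ℝ) * (1 + Real.log N) ^ 3) := by
        have := tau_sq_sum N hN1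
        linarith
    _ ≤ 4 * (H * (1 + Real.log H) ^ 3) := by
        have hlog : Real.log (N : ℝ) ≤ Real.log H :=
          Real.log_le_log (by exact_mod_cast hN1) hNH
        have hlN : (0:ℝ) ≤ Real.log (N : ℝ) := Real.log_nonneg (by exact_mod_cast hN1)
        have h1 : (1 + Real.log (N : ℝ)) ^ 3 ≤ (1 + Real.log H) ^ 3 :=
          pow_le_pow_left₀ (by linarith) (by linarith) 3
        have h2 : (N : ℝ) * (1 + Real.log (N : ℝ)) ^ 3 ≤ H * (1 + Real.log H) ^ 3 := by
          have h3 : (0:ℝ) ≤ (1 + Real.log (N : ℝ)) ^ 3 := by positivity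
          nlinarith
        linarith
    _ ≤ 4 * (1 + 3 / ε) ^ 3 * H * (H * D₀ * (R : ℝ)) ^ ε := by
        have hδ : 0 < ε / 3 := by linarith
        have h1 : Real.log H ≤ H ^ (ε / 3) / (ε / 3) := Real.log_le_rpow_div hHpos.le hδ
        have h2 : (1:ℝ) ≤ H ^ (ε / 3) := Real.one_le_rpow hH hδ.le
        have h3 : 1 + Real.log H ≤ (1 + 3 / ε) * H ^ (ε / 3) := by
          have : H ^ (ε / 3) / (ε / 3) = (3 / ε) * H ^ (ε / 3) := by
            field_simp
          nlinarith [h1, h2]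
        have h4 : (1 + Real.log H) ^ 3 ≤ ((1 + 3 / ε) * H ^ (ε / 3)) ^ 3 :=
          pow_le_pow_left₀ (by linarith) h3 3
        have h5 : ((1 + 3 / ε) * H ^ (ε / 3)) ^ 3 = (1 + 3 / ε) ^ 3 * H ^ ε := by
          rw [mul_pow, ← Real.rpow_natCast (H ^ (ε / 3)) 3, ← Real.rpow_mul hHpos.le]
          norm_num
        have hDR : (1:ℝ) ≤ D₀ * (R : ℝ) := by
          have hR1 : (1:ℝ) ≤ (R : ℝ) := by exact_mod_cast hR
          nlinarith
        have h6 : H ^ ε ≤ (H * D₀ * (R : ℝ)) ^ ε := by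
          apply Real.rpow_le_rpow hHpos.le _ hε.le
          nlinarith
        have h7 : (0:ℝ) ≤ (1 + 3 / ε) ^ 3 := by positivity
        have h8 : (1 + Real.log H) ^ 3 ≤ (1 + 3 / ε) ^ 3 * (H * D₀ * (R : ℝ)) ^ ε := by
          calc (1 + Real.log H) ^ 3 ≤ (1 + 3 / ε) ^ 3 * H ^ ε := h5 ▸ h4
            _ ≤ (1 + 3 / ε) ^ 3 * (H * D₀ * (R : ℝ)) ^ ε :=
              mul_le_mul_of_nonneg_left h6 h7
        calc 4 * (H * (1 + Real.log H) ^ 3)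
            ≤ 4 * (H * ((1 + 3 / ε) ^ 3 * (H * D₀ * (R : ℝ)) ^ ε)) := by
              have := mul_le_mul_of_nonneg_left h8 hHpos.le
              linarith
          _ = 4 * (1 + 3 / ε) ^ 3 * H * (H * D₀ * (R : ℝ)) ^ ε := by ring
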